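/- Let r ≥ 1, let 𝔩_0, …, 𝔩_r and m be positive integers with gcd(𝔩_i, m) = 1 for all i = 0, …, r. Write b̄ = lcm(𝔩_0, …, 𝔩_r), b_i = b̄/𝔩_i, b(i) = gcd{ b_j : 0 ≤ j ≤ r, j ≠ i }, and for the extended family (𝔩_0, …, 𝔩_r, 𝔩_{r+1}) with 𝔩_{r+1} = m write b̄', b'_i, b'(i) for the corresponding quantities. Then: (1) b̄' = b̄·m; (2) b'(i) = b(i) for every 0 ≤ i ≤ r; (3) b'(r+1) = m. Consequently, setting E_r(𝔩_0,…,𝔩_r) = (𝔩_0⋯𝔩_r)/(2b̄) · ((r−1) − Σ_{i=0}^r b(i)/𝔩_i) + 1 as a rational number, one has E_{r+1}(𝔩_0, …, 𝔩_r, m) = E_r(𝔩_0, …, 𝔩_r). -/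

import Mathlib

/-- `b̄ = lcm(𝔩_0, …, 𝔩_{n-1})`. -/
def bbar {n : ℕ} (l : Fin n → ℕ) : ℕ := Finset.univ.lcm l

/-- `b(i) = gcd{ b_j : j ≠ i }` where `b_j = b̄ / 𝔩_j`. -/
def bOmit {n : ℕ} (l : Fin n → ℕ) (i : Fin n) : ℕ :=
  (Finset.univ.erase i).gcd fun j => bbar l / l j

/-- The genus expression `E_r(𝔩_0,…,𝔩_r) = (𝔩_0⋯𝔩_r)/(2b̄)·((r−1) − Σ b(i)/𝔩_i) + 1`. -/
def genusE {r : ℕ} (l : Fin (r + 1) → ℕ) : ℚ :=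
  (∏ i, (l i : ℚ)) / (2 * (bbar l : ℚ)) *
      ((r : ℚ) - 1 - ∑ i, (bOmit l i : ℚ) / (l i : ℚ)) + 1

/-- Adjoining an exponent `m` coprime to all the `𝔩_i` multiplies the lcm by `m`,
leaves all `b(i)` unchanged, produces `b(r+1) = m`, and does not change the genus. -/
theorem genus_unchanged_by_coprime_extension (r : ℕ) (hr : 1 ≤ r)
    (l : Fin (r + 1) → ℕ) (m : ℕ) (hl : ∀ i, 0 < l i) (hm : 0 < m)
    (hcop : ∀ i, Nat.gcd (l i) m = 1) :
    bbar (Fin.snoc l m) = bbar l * m ∧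
    (∀ i : Fin (r + 1), bOmit (Fin.snoc l m) i.castSucc = bOmit l i) ∧
    bOmit (Fin.snoc l m) (Fin.last (r + 1)) = m ∧
    genusE (Fin.snoc l m : Fin (r + 1 + 1) → ℕ) = genusE l := by
  classical
  have hln : ∀ j, l j ∣ bbar l := fun j => Finset.dvd_lcm (Finset.mem_univ j)
  have hb0 : bbar l ≠ 0 := by
    rw [bbar, Ne, Finset.lcm_eq_zero_iff]
    rintro ⟨j, -, hj⟩
    exact (hl j).ne' hj
  have hcb : Nat.Coprime m (bbar l) := by
    have hprod : Nat.Coprime m (∏ i, l i) :=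
      Nat.Coprime.prod_right fun i _ => (Nat.coprime_comm.mp (hcop i))
    exact Nat.Coprime.coprime_dvd_right
      (Finset.lcm_dvd fun j _ => Finset.dvd_prod_of_mem l (Finset.mem_univ j)) hprod
  -- the snoc composed with castSucc is l
  have hemb : ∀ j : Fin (r + 1), (Fin.castSuccEmb j : Fin (r + 1 + 1)) = j.castSucc :=
    fun _ => rfl
  have hcomp : (Fin.snoc l m : Fin (r + 1 + 1) → ℕ) ∘ Fin.castSuccEmb = l := by
    funext j
    simp only [Function.comp_apply, hemb, Fin.snoc_castSucc]
  -- part 1 : the lcm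
  have h1 : bbar (Fin.snoc l m) = bbar l * m := by
    rw [bbar, Fin.univ_castSuccEmb, Finset.cons_eq_insert, Finset.lcm_insert,
      Finset.map_eq_image, Finset.lcm_image, hcomp, Fin.snoc_last]
    show Nat.lcm m (bbar l) = bbar l * m
    rw [hcb.lcm_eq_mul, mul_comm]
  -- the value of b'_j at castSucc j
  have h2 : ∀ j : Fin (r + 1),
      bbar (Fin.snoc l m) / (Fin.snoc l m : Fin (r + 1 + 1) → ℕ) j.castSucc
        = m * (bbar l / l j) := by
    intro j
    rw [h1, Fin.snoc_castSucc, mul_comm (bbar l) m, Nat.mul_div_assoc m (hln j)]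
  have h3 : bbar (Fin.snoc l m) / (Fin.snoc l m : Fin (r + 1 + 1) → ℕ) (Fin.last (r + 1))
      = bbar l := by
    rw [h1, Fin.snoc_last, Nat.mul_div_cancel _ hm]
  -- gcd of all b_j is 1
  have hgcd1 : (Finset.univ.gcd fun j => bbar l / l j) = 1 := by
    set d := Finset.univ.gcd fun j => bbar l / l j with hd
    have hdj : ∀ j : Fin (r + 1), d ∣ bbar l / l j :=
      fun j => Finset.gcd_dvd (Finset.mem_univ j)
    have hdvd : d ∣ bbar l := (hdj 0).trans (Nat.div_dvd_of_dvd (hln 0))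
    have h4 : ∀ j, l j ∣ bbar l / d := by
      intro j
      rw [Nat.dvd_div_iff_mul_dvd hdvd]
      have := (Nat.dvd_div_iff_mul_dvd (hln j)).mp (hdj j)
      rwa [mul_comm] at this
    have h5 : bbar l ∣ bbar l / d := Finset.lcm_dvd fun j _ => h4 j
    have h6 : bbar l / d = bbar l := Nat.dvd_antisymm (Nat.div_dvd_of_dvd hdvd) h5
    rcases Nat.div_eq_self.mp h6 with h | h
    · exact absurd h hb0
    · exact h
  -- b(i) divides b̄
  have hGdvd : ∀ i : Fin (r + 1), bOmit l i ∣ bbar l := by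
    intro i
    haveI : Nontrivial (Fin (r + 1)) := Fin.nontrivial_iff_two_le.mpr (by omega)
    obtain ⟨j, hj⟩ := exists_ne i
    exact (Finset.gcd_dvd (Finset.mem_erase.mpr ⟨hj, Finset.mem_univ j⟩)).trans
      (Nat.div_dvd_of_dvd (hln j))
  -- part 2
  have h2' : ∀ i : Fin (r + 1), bOmit (Fin.snoc l m) i.castSucc = bOmit l i := by
    intro i
    have hne : Fin.last (r + 1) ≠ i.castSucc := (Fin.castSucc_lt_last i).ne'
    rw [bOmit, Fin.univ_castSuccEmb, Finset.cons_eq_insert,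
      Finset.erase_insert_of_ne hne, ← hemb i, ← Finset.map_erase, Finset.gcd_insert,
      Finset.map_eq_image, Finset.gcd_image]
    have hgc : (Finset.univ.erase i).gcd
        ((fun j => bbar (Fin.snoc l m) / (Fin.snoc l m : Fin (r + 1 + 1) → ℕ) j) ∘ Fin.castSuccEmb)
        = (Finset.univ.erase i).gcd fun j => m * (bbar l / l j) :=
      Finset.gcd_congr rfl fun j _ => by
        simp only [Function.comp_apply, hemb]; exact h2 j
    rw [hgc, h3, Finset.gcd_mul_left]
    have hnorm : (normalize m : ℕ) = m := by simp
    rw [hnorm]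
    show Nat.gcd (bbar l) (m * bOmit l i) = bOmit l i
    rw [Nat.gcd_comm, Nat.Coprime.gcd_mul_left_cancel _ hcb,
      Nat.gcd_eq_left (hGdvd i)]
  -- part 3
  have h3' : bOmit (Fin.snoc l m) (Fin.last (r + 1)) = m := by
    rw [bOmit, Fin.univ_castSuccEmb, Finset.erase_cons, Finset.map_eq_image,
      Finset.gcd_image]
    have hgc : (Finset.univ : Finset (Fin (r + 1))).gcd
        ((fun j => bbar (Fin.snoc l m) / (Fin.snoc l m : Fin (r + 1 + 1) → ℕ) j) ∘ Fin.castSuccEmb)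
        = (Finset.univ : Finset (Fin (r + 1))).gcd fun j => m * (bbar l / l j) :=
      Finset.gcd_congr rfl fun j _ => by
        simp only [Function.comp_apply, hemb]; exact h2 j
    rw [hgc, Finset.gcd_mul_left, hgcd1]
    simp
  refine ⟨h1, h2', h3', ?_⟩
  -- the genus computation
  have hmQ : (m : ℚ) ≠ 0 := Nat.cast_ne_zero.mpr hm.ne'
  have hbQ : (bbar l : ℚ) ≠ 0 := Nat.cast_ne_zero.mpr hb0
  rw [genusE, genusE, h1, Fin.prod_univ_castSucc, Fin.sum_univ_castSucc]
  simp only [Fin.snoc_castSucc, Fin.snoc_last, h2', h3']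
  push_cast
  field_simp
  ring
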